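/- Let G be an f-equitable graph with quotient matrix Q and valency k, where the range of f is {x_0, x_1, ..., x_r}. Set h_{x_0} = 0 and define (h_{x_1}, ..., h_{x_r}) = −𝟙 ((1/k) Q⁻ − I)^{−1}, where Q⁻ is obtained from Q by deleting the x_0-th row and column. Then for all vertices u, v of G, the average hitting time H(G; (v, u)) of a simple random walk from u to v equals h_{f(v,u)}. -/

import Mathlib

open Matrix

private lemma max_principle {V : Type*} [Fintype V] [DecidableEq V]
    (G : SimpleGraph V) [DecidableRel G.Adj] (hconn : G.Connected)
    (k : ℕ) (hreg : ∀ v : V, G.degree v = k) (v : V) (g : V → ℝ)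
    (hgv : g v = 0)
    (hrec : ∀ u : V, u ≠ v → g u = (∑ w ∈ G.neighborFinset u, g w) / k) :
    ∀ u : V, g u ≤ 0 := by
  obtain ⟨u₀, -, hmax⟩ := Finset.exists_max_image Finset.univ g ⟨v, Finset.mem_univ v⟩
  set M := g u₀ with hM
  have key : ∀ (w : V) (p : G.Walk w v), g w = M → g v = M := by
    intro w p
    induction p with
    | nil => exact fun h => h
    | @cons a b c ha p ih =>
      intro hw
      by_cases hav : a = c
      · rw [hav] at hw; exact hw
      · have hk : 0 < k := by
          have := hreg a
          have h1 : 0 < G.degree a := by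
            rw [G.degree_pos_iff_exists_adj]; exact ⟨b, ha⟩
          omega
        have hkR : (0 : ℝ) < (k : ℝ) := by exact_mod_cast hk
        have hsum : ∑ w' ∈ G.neighborFinset a, M = ∑ w' ∈ G.neighborFinset a, g w' := by
          have hcard : (G.neighborFinset a).card = k := by
            rw [G.card_neighborFinset_eq_degree]; exact hreg a
          have := hrec a hav
          rw [hw] at this
          rw [Finset.sum_const, hcard, nsmul_eq_mul]
          field_simp at this
          linarith
        have hall := (Finset.sum_eq_sum_iff_of_le
          (fun i _ => hmax i (Finset.mem_univ i))).1 hsum.symm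
        have hb : g b = M := hall b (by rwa [SimpleGraph.mem_neighborFinset])
        exact ih hgv hrec hb
  obtain ⟨p⟩ := hconn.preconnected u₀ v
  have hvM : g v = M := key u₀ p rfl
  intro u
  have h3 := hmax u (Finset.mem_univ u)
  linarith

/-- Let `G` be an `f`-equitable graph (level sets of `f o := f o ·`
indexed by `Fin (r+1)`, `f o v = 0 ↔ v = o`, quotient matrix `Q` independent of `o`,
all values attained) with valency `k`.  Set `h 0 = 0` and define `(h 1, ..., h r)`
as `−𝟙 ((1/k) Q⁻ − I)⁻¹`, i.e. as the (unique, since `(1/k) Q⁻ − I` is invertible)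
solution of `(h 1,...,h r) ((1/k) Q⁻ − I) = −𝟙`, where `Q⁻` deletes row and column
`0`.  If `H v u` denotes the average hitting time from `u` to `v` (characterized by
`H v v = 0` and the one-step recurrence), then `H v u = h (f v u)` for all `u, v`. -/
theorem hitting_time_f_equitable {V : Type*} [Fintype V] [DecidableEq V] {r : ℕ}
    (G : SimpleGraph V) [DecidableRel G.Adj] (hconn : G.Connected)
    (f : V → V → Fin (r + 1))
    (hf0 : ∀ o v : V, f o v = 0 ↔ v = o)
    (hfsurj : ∀ (o : V) (i : Fin (r + 1)), ∃ v : V, f o v = i)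
    (Q : Fin (r + 1) → Fin (r + 1) → ℕ)
    (hQ : ∀ (o v : V) (i : Fin (r + 1)),
      ((G.neighborFinset v).filter (fun u => f o u = i)).card = Q i (f o v))
    (k : ℕ) (hreg : ∀ v : V, G.degree v = k)
    (h : Fin (r + 1) → ℝ) (hh0 : h 0 = 0)
    (hinv : IsUnit (((k : ℝ)⁻¹ • Matrix.of fun i j : Fin r => (Q i.succ j.succ : ℝ)) - 1))
    (hh : Matrix.vecMul (fun i : Fin r => h i.succ)
        (((k : ℝ)⁻¹ • Matrix.of fun i j : Fin r => (Q i.succ j.succ : ℝ)) - 1) =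
      fun _ : Fin r => (-1 : ℝ))
    (H : V → V → ℝ) (hH0 : ∀ v : V, H v v = 0)
    (hHrec : ∀ v u : V, u ≠ v →
      H v u = 1 + (∑ w ∈ G.neighborFinset u, H v w) / (G.degree u : ℝ)) :
    ∀ u v : V, H v u = h (f v u) := by
  intro u v
  -- the solution `h` satisfies the recurrence at every index `j.succ`
  have hhrec : ∀ j : Fin r,
      h j.succ = 1 + (∑ i : Fin (r + 1), (Q i j.succ : ℝ) * h i) / k := by
    intro j
    have := congrFun hh j
    simp only [Matrix.vecMul, dotProduct, Matrix.sub_apply, Matrix.smul_apply,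
      Matrix.one_apply, Matrix.of_apply, smul_eq_mul] at this
    have hsplit : ∑ i : Fin r, h i.succ * ((k : ℝ)⁻¹ * (Q i.succ j.succ : ℝ) -
        if i = j then 1 else 0) =
        (∑ i : Fin r, (k : ℝ)⁻¹ * ((Q i.succ j.succ : ℝ) * h i.succ)) - h j.succ := by
      calc ∑ i : Fin r, h i.succ * ((k : ℝ)⁻¹ * (Q i.succ j.succ : ℝ) -
              if i = j then 1 else 0)
          = ∑ i : Fin r, ((k : ℝ)⁻¹ * ((Q i.succ j.succ : ℝ) * h i.succ) -
              if i = j then h i.succ else 0) :=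
            Finset.sum_congr rfl fun i _ => by split <;> ring
        _ = (∑ i : Fin r, (k : ℝ)⁻¹ * ((Q i.succ j.succ : ℝ) * h i.succ)) -
              ∑ i : Fin r, (if i = j then h i.succ else 0) := Finset.sum_sub_distrib _ _
        _ = _ := by rw [Finset.sum_ite_eq' Finset.univ j (fun i => h i.succ)]; simp
    rw [hsplit] at this
    rw [← Finset.mul_sum] at this
    have hsum : ∑ i : Fin (r + 1), (Q i j.succ : ℝ) * h i =
        ∑ i : Fin r, (Q i.succ j.succ : ℝ) * h i.succ := by
      rw [Fin.sum_univ_succ, hh0]; ring_nf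
    rw [hsum, div_eq_inv_mul]
    linarith
  -- reduce to showing the difference is zero
  have key : ∀ u : V, H v u - h (f v u) = 0 := by
    set g : V → ℝ := fun u => H v u - h (f v u) with hg
    have hgv : g v = 0 := by
      simp only [hg, hH0]
      rw [(hf0 v v).mpr rfl, hh0, sub_zero]
    have hgrec : ∀ u : V, u ≠ v → g u = (∑ w ∈ G.neighborFinset u, g w) / k := by
      intro u huv
      have hk : 0 < k := by
        have h1 : 0 < G.degree u := by
          rw [G.degree_pos_iff_exists_adj]
          obtain ⟨p⟩ := hconn.preconnected u v
          cases p with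
          | nil => exact absurd rfl huv
          | cons ha _ => exact ⟨_, ha⟩
        rw [hreg u] at h1; exact h1
      have hkR : (k : ℝ) ≠ 0 := by positivity
      -- recurrence for h ∘ f v
      have hfu : f v u ≠ 0 := fun hc => huv ((hf0 v u).mp hc)
      obtain ⟨j, hj⟩ := Fin.exists_succ_eq.mpr hfu
      have hnsum : ∑ w ∈ G.neighborFinset u, h (f v w) =
          ∑ i : Fin (r + 1), (Q i (f v u) : ℝ) * h i := by
        rw [← Finset.sum_fiberwise' (G.neighborFinset u) (fun w => f v w) (fun i => h i)]
        refine Finset.sum_congr rfl fun i _ => ?_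
        rw [Finset.sum_const, hQ v u i]
        simp [mul_comm]
      have hrech : h (f v u) = 1 + (∑ w ∈ G.neighborFinset u, h (f v w)) / k := by
        rw [hnsum, ← hj]
        exact hhrec j
      have hHr := hHrec v u huv
      rw [hreg u] at hHr
      simp only [hg]
      rw [hHr, hrech, Finset.sum_sub_distrib]
      ring
    have h1 : ∀ u : V, g u ≤ 0 := max_principle G hconn k hreg v g hgv hgrec
    have h2 : ∀ u : V, -g u ≤ 0 := by
      apply max_principle G hconn k hreg v (fun u => -g u)
      · rw [hgv]; ring
      · intro u huv
        rw [hgrec u huv, Finset.sum_neg_distrib, neg_div]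
    intro u
    have A : H v u - h (f v u) ≤ 0 := h1 u
    have B : -(H v u - h (f v u)) ≤ 0 := h2 u
    linarith
  have := key u
  linarith
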